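/- arXiv:1812.04517 — 2 statements merged into one kernel-verified Lean document; each statement's English description precedes it below -/
import Mathlib

section
/- Let d : X → ℝ be continuously differentiable and 1-strongly convex with respect to a norm ‖·‖, and let V(x,y) = d(y) − d(x) − ⟨∇d(x), y − x⟩ be the Bregman divergence. Let Q ⊆ X be closed convex, y ∈ Q, p ∈ X*, h > 0, and z = argmin_{u ∈ Q} { ⟨h·p, u⟩ + V(y, u) }. Then for every x ∈ Q: h⟨p, y − x⟩ ≤ (h²/2)‖p‖_*² + V(y, x) − V(z, x). -/
open Set

theorem stmt7 (X : Type*) [NormedAddCommGroup X] [NormedSpace ℝ X]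
    [FiniteDimensional ℝ X]
    (d : X → ℝ) (d' : X → X →L[ℝ] ℝ)
    (hd : ∀ x, HasFDerivAt d (d' x) x) (hd' : Continuous d')
    (hstrong : ∀ x y : X, ‖x - y‖ ^ 2 ≤ (d' x - d' y) (x - y))
    (Q : Set X) (hQc : IsClosed Q) (hQ : Convex ℝ Q)
    (y : X) (hy : y ∈ Q) (p : X →L[ℝ] ℝ) (h : ℝ) (hh : 0 < h)
    (z : X) (hz : z ∈ Q)
    (hmin : ∀ u ∈ Q, h * p z + (d z - d y - d' y (z - y))
      ≤ h * p u + (d u - d y - d' y (u - y))) :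
    ∀ x ∈ Q, h * p (y - x) ≤ h ^ 2 / 2 * ‖p‖ ^ 2
      + (d x - d y - d' y (x - y)) - (d x - d z - d' z (x - z)) := by
  -- Lemma A: Bregman divergence lower bound
  have lemA : ∀ a b : X, ‖b - a‖ ^ 2 / 2 ≤ d b - d a - d' a (b - a) := by
    intro a b
    set c := b - a with hc
    set φ : ℝ → ℝ := fun t => d (a + t • c) - t * d' a c - t ^ 2 / 2 * ‖c‖ ^ 2 with hφ
    have hderiv : ∀ t : ℝ,
        HasDerivAt φ (d' (a + t • c) c - d' a c - t * ‖c‖ ^ 2) t := by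
      intro t
      have h1 : HasDerivAt (fun t : ℝ => a + t • c) c t := by
        simpa using ((hasDerivAt_id t).smul_const c).const_add a
      have h2 : HasDerivAt (fun t : ℝ => d (a + t • c)) (d' (a + t • c) c) t :=
        (hd (a + t • c)).comp_hasDerivAt t h1
      have h3 : HasDerivAt (fun t : ℝ => t * d' a c) (d' a c) t := by
        simpa using (hasDerivAt_id t).mul_const (d' a c)
      have h4 : HasDerivAt (fun t : ℝ => t ^ 2 / 2 * ‖c‖ ^ 2) (t * ‖c‖ ^ 2) t := by
        have : HasDerivAt (fun t : ℝ => t ^ 2 / 2) t t := by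
          simpa using ((hasDerivAt_pow 2 t).div_const 2)
        simpa using this.mul_const (‖c‖ ^ 2)
      exact (h2.sub h3).sub h4
    have hdiff : Differentiable ℝ φ := fun t => (hderiv t).differentiableAt
    have hmono : MonotoneOn φ (Icc (0 : ℝ) 1) := by
      apply monotoneOn_of_deriv_nonneg (convex_Icc 0 1) hdiff.continuous.continuousOn
        (hdiff.differentiableOn.mono interior_subset)
      intro t ht
      rw [interior_Icc] at ht
      rw [(hderiv t).deriv]
      have hs := hstrong (a + t • c) a
      have heq : a + t • c - a = t • c := by abel
      rw [heq] at hs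
      have hrhs : (d' (a + t • c) - d' a) (t • c)
          = t * (d' (a + t • c) c - d' a c) := by
        simp [mul_sub]
      have hlhs : ‖t • c‖ ^ 2 = t ^ 2 * ‖c‖ ^ 2 := by
        rw [norm_smul]
        simp [abs_of_pos ht.1, mul_pow]
      rw [hrhs, hlhs] at hs
      have ht0 : 0 < t := ht.1
      nlinarith [hs]
    have := hmono (left_mem_Icc.2 (by norm_num)) (right_mem_Icc.2 (by norm_num)) zero_le_one
    have hφ0 : φ 0 = d a := by simp [hφ]
    have hφ1 : φ 1 = d b - d' a c - ‖c‖ ^ 2 / 2 := by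
      simp [hφ, hc]
      ring
    rw [hφ0, hφ1] at this
    linarith
  -- Lemma B: first-order optimality
  have lemB : ∀ x ∈ Q, 0 ≤ h * (p x - p z) + (d' z x - d' z z - (d' y x - d' y z)) := by
    intro x hx
    set w := x - z with hw
    set g : ℝ → ℝ := fun t => h * p (z + t • w) + d (z + t • w) - d' y (z + t • w) with hg
    have hline : ∀ t : ℝ, HasDerivAt (fun t : ℝ => z + t • w) w t := by
      intro t
      simpa using ((hasDerivAt_id t).smul_const w).const_add z
    have hgd : HasDerivAt g (h * p w + d' z w - d' y w) 0 := by
      have h1 : HasDerivAt (fun t : ℝ => p (z + t • w)) (p w) 0 :=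
        (p.hasFDerivAt.comp_hasDerivAt 0 (hline 0))
      have h2 : HasDerivAt (fun t : ℝ => d (z + t • w)) (d' (z + (0:ℝ) • w) w) 0 :=
        (hd _).comp_hasDerivAt 0 (hline 0)
      have h3 : HasDerivAt (fun t : ℝ => d' y (z + t • w)) (d' y w) 0 :=
        ((d' y).hasFDerivAt.comp_hasDerivAt 0 (hline 0))
      simp only [zero_smul, add_zero] at h2
      exact ((h1.const_mul h).add h2).sub h3
    have hge : ∀ t ∈ Ioc (0 : ℝ) 1, g 0 ≤ g t := by
      intro t ht
      have hmem : z + t • w ∈ Q := by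
        have := hQ hz hx (by linarith [ht.2] : (0:ℝ) ≤ 1 - t) ht.1.le (by ring)
        convert this using 1
        rw [hw]
        module
      have hm := hmin (z + t • w) hmem
      simp only [hg, map_sub, map_add, map_zero, zero_smul, add_zero] at *
      linarith
    have htend : Filter.Tendsto (slope g 0) (nhdsWithin 0 (Ioi 0))
        (nhds (h * p w + d' z w - d' y w)) := by
      have := hasDerivAt_iff_tendsto_slope.mp hgd
      exact this.mono_left (nhdsWithin_mono _ (fun t ht => ne_of_gt ht))
    have hnonneg : ∀ᶠ t in nhdsWithin (0:ℝ) (Ioi 0), 0 ≤ slope g 0 t := by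
      filter_upwards [Ioc_mem_nhdsGT_of_mem (Set.left_mem_Ico.2 zero_lt_one)] with t ht
      have := hge t ht
      rw [slope_def_field, sub_zero]
      have ht0 : (0:ℝ) < t := ht.1
      exact div_nonneg (by linarith) ht0.le
    have hderiv_nonneg : 0 ≤ h * p w + d' z w - d' y w :=
      ge_of_tendsto htend hnonneg
    simp only [hw, map_sub, mul_sub] at hderiv_nonneg ⊢
    linarith
  intro x hx
  have hA := lemA y z
  have hB := lemB x hx
  have cs : p y - p z ≤ ‖p‖ * ‖y - z‖ := by
    calc p y - p z = p (y - z) := by rw [map_sub]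
    _ ≤ |p (y - z)| := le_abs_self _
    _ ≤ ‖p‖ * ‖y - z‖ := p.le_opNorm _
  have hcs' : h * (p y - p z) ≤ h * (‖p‖ * ‖y - z‖) :=
    mul_le_mul_of_nonneg_left cs hh.le
  have amgm : h * (‖p‖ * ‖y - z‖) ≤ h ^ 2 / 2 * ‖p‖ ^ 2 + ‖y - z‖ ^ 2 / 2 := by
    nlinarith [sq_nonneg (h * ‖p‖ - ‖y - z‖)]
  have hnormrev : ‖z - y‖ = ‖y - z‖ := norm_sub_rev z y
  rw [hnormrev] at hA
  simp only [map_sub] at hA ⊢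
  simp only [mul_sub] at *
  linarith
end

section
/- Under the setting of the Bregman mirror step lemma, if f is convex and subdifferentiable at y with subgradient p = ∇f(y), then for z = Mirr_y(h·∇f(y)) and every x ∈ Q: h·(f(y) − f(x)) ≤ (h²/2)‖∇f(y)‖_*² + V(y, x) − V(z, x). -/
open Set

private lemma slope_nonneg_aux {φ : ℝ → ℝ} {c : ℝ} (hφ : HasDerivAt φ c 0)
    (hmin : ∀ t ∈ Set.Ioc (0:ℝ) 1, φ 0 ≤ φ t) : 0 ≤ c := by
  have htend : Filter.Tendsto (slope φ 0) (nhdsWithin 0 (Set.Ioi 0)) (nhds c) :=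
    ((hasDerivAt_iff_tendsto_slope).1 hφ).mono_left
      (nhdsWithin_mono _ (fun t ht => ne_of_gt ht))
  refine ge_of_tendsto htend ?_
  filter_upwards [Ioc_mem_nhdsGT_of_mem (Set.mem_Ico.2 ⟨le_refl (0:ℝ), one_pos⟩)] with t ht
  have h1 := hmin t ht
  have h2 : (0:ℝ) < t := ht.1
  rw [slope_def_field]
  rw [sub_zero]
  have : 0 ≤ φ t - φ 0 := by linarith
  positivity

private lemma bregman_lower {X : Type*} [NormedAddCommGroup X] [NormedSpace ℝ X]
    (d : X → ℝ) (d' : X → X →L[ℝ] ℝ) (hd : ∀ x, HasFDerivAt d (d' x) x)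
    (hstrong : ∀ x y : X, ‖x - y‖ ^ 2 ≤ (d' x - d' y) (x - y))
    (y z : X) : ‖z - y‖ ^ 2 / 2 ≤ d z - d y - d' y (z - y) := by
  set w := z - y with hw
  set φ : ℝ → ℝ := fun t => d (y + t • w) - t * (d' y w) - t ^ 2 / 2 * ‖w‖ ^ 2 with hφdef
  have hline : ∀ t : ℝ, HasDerivAt (fun t : ℝ => y + t • w) w t := fun t => by
    simpa using ((hasDerivAt_id t).smul_const w).const_add y
  have hderiv : ∀ t : ℝ, HasDerivAt φ (d' (y + t • w) w - d' y w - t * ‖w‖ ^ 2) t := by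
    intro t
    have h1 : HasDerivAt (fun t : ℝ => d (y + t • w)) (d' (y + t • w) w) t := by
      simpa [Function.comp_def] using (hd (y + t • w)).comp_hasDerivAt t (hline t)
    have h2 : HasDerivAt (fun t : ℝ => t * (d' y w)) (d' y w) t := by
      simpa using (hasDerivAt_id t).mul_const (d' y w)
    have h3 : HasDerivAt (fun t : ℝ => t ^ 2 / 2 * ‖w‖ ^ 2) (t * ‖w‖ ^ 2) t := by
      have := ((hasDerivAt_pow 2 t).div_const 2).mul_const (‖w‖ ^ 2)
      simpa [mul_comm, mul_assoc, mul_left_comm] using this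
    exact (h1.sub h2).sub h3
  have hmono : MonotoneOn φ (Set.Icc (0:ℝ) 1) := by
    apply monotoneOn_of_deriv_nonneg (convex_Icc 0 1)
    · exact fun t _ => ((hderiv t).continuousAt).continuousWithinAt
    · exact fun t _ => ((hderiv t).differentiableAt).differentiableWithinAt
    · intro t ht
      rw [(hderiv t).deriv]
      have htpos : (0:ℝ) ≤ t := by
        rw [interior_Icc] at ht; exact le_of_lt ht.1
      rcases eq_or_lt_of_le htpos with rfl | htpos
      · simp
      · have hs := hstrong (y + t • w) y
        have : (y + t • w) - y = t • w := by abel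
        rw [this] at hs
        simp only [ContinuousLinearMap.sub_apply, map_smul, smul_eq_mul, norm_smul,
          Real.norm_eq_abs, abs_of_pos htpos, mul_pow] at hs
        nlinarith
  have h01 := hmono (Set.mem_Icc.2 ⟨le_refl (0:ℝ), zero_le_one⟩)
    (Set.mem_Icc.2 ⟨zero_le_one, le_refl (1:ℝ)⟩) zero_le_one
  simp only [hφdef, zero_smul, add_zero, zero_mul, one_smul, one_mul, zero_pow, one_pow,
    ne_eq, OfNat.ofNat_ne_zero, not_false_eq_true, zero_div, sub_zero] at h01
  have : y + w = z := by simp [hw]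
  rw [this] at h01
  linarith

theorem stmt8 (X : Type*) [NormedAddCommGroup X] [NormedSpace ℝ X]
    [FiniteDimensional ℝ X]
    (d : X → ℝ) (d' : X → X →L[ℝ] ℝ)
    (hd : ∀ x, HasFDerivAt d (d' x) x) (hd' : Continuous d')
    (hstrong : ∀ x y : X, ‖x - y‖ ^ 2 ≤ (d' x - d' y) (x - y))
    (Q : Set X) (hQc : IsClosed Q) (hQ : Convex ℝ Q)
    (y : X) (hy : y ∈ Q) (h : ℝ) (hh : 0 < h)
    (f : X → ℝ) (hf : ConvexOn ℝ univ f)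
    (p : X →L[ℝ] ℝ) (hp : ∀ x ∈ Q, f y + p (x - y) ≤ f x)
    (z : X) (hz : z ∈ Q)
    (hmin : ∀ u ∈ Q, h * p z + (d z - d y - d' y (z - y))
      ≤ h * p u + (d u - d y - d' y (u - y))) :
    ∀ x ∈ Q, h * (f y - f x) ≤ h ^ 2 / 2 * ‖p‖ ^ 2
      + (d x - d y - d' y (x - y)) - (d x - d z - d' z (x - z)) := by
  intro x hx
  -- variational inequality: 0 ≤ h * p (x-z) + (d' z - d' y) (x - z)
  set w := x - z with hw
  have hvar : 0 ≤ h * p w + (d' z (w) - d' y (w)) := by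
    set φ : ℝ → ℝ := fun t => h * p (z + t • w)
      + (d (z + t • w) - d y - d' y ((z + t • w) - y)) with hφdef
    have hline : ∀ t : ℝ, HasDerivAt (fun t : ℝ => z + t • w) w t := fun t => by
      simpa using ((hasDerivAt_id t).smul_const w).const_add z
    have hderiv : HasDerivAt φ (h * p w + (d' z w - d' y w)) 0 := by
      have h1 : HasDerivAt (fun t : ℝ => h * p (z + t • w)) (h * p w) 0 := by
        have := (p.hasFDerivAt.comp_hasDerivAt 0 (hline 0))
        simpa using (this.const_mul h)
      have h2 : HasDerivAt (fun t : ℝ => d (z + t • w)) (d' z w) 0 := by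
        have := (hd (z + (0:ℝ) • w)).comp_hasDerivAt 0 (hline 0)
        simpa [Function.comp_def] using this
      have h3 : HasDerivAt (fun t : ℝ => d' y ((z + t • w) - y)) (d' y w) 0 := by
        have hl : HasDerivAt (fun t : ℝ => (z + t • w) - y) w 0 := (hline 0).sub_const y
        simpa only [Function.comp_def] using ((d' y).hasFDerivAt.comp_hasDerivAt 0 hl)
      exact h1.add ((h2.sub_const (d y)).sub h3)
    apply slope_nonneg_aux hderiv
    intro t ht
    have hu : z + t • w ∈ Q := by
      have := hQ hz hx (a := 1 - t) (b := t) (by linarith [ht.2]) (le_of_lt ht.1) (by ring)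
      convert this using 1
      simp [hw]
      module
    have := hmin (z + t • w) hu
    simp only [hφdef]
    convert this using 2
    · simp
    · simp
  -- Bregman lower bound
  have hbr := bregman_lower d d' hd hstrong y z
  -- subgradient
  have hsub := hp x hx
  -- norm bound
  have hpb : p (y - z) ≤ ‖p‖ * ‖y - z‖ := by
    have := p.le_opNorm (y - z)
    rw [Real.norm_eq_abs] at this
    exact (le_abs_self _).trans this
  -- three point identity & arithmetic
  have h3pt : d' z w - d' y w =
      (d x - d y - d' y (x - y)) - (d x - d z - d' z (x - z)) - (d z - d y - d' y (z - y)) := by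
    have e1 : d' y (x - y) = d' y (x - z) + d' y (z - y) := by
      rw [← map_add]; congr 1; abel
    rw [hw, e1]; ring
  have hdecomp : p (x - y) = p (x - z) - p (y - z) := by
    rw [← map_sub]; congr 1; abel
  have hyz : ‖y - z‖ = ‖z - y‖ := norm_sub_rev y z
  have hfy : f y - f x ≤ - p (x - y) := by linarith
  have key : h * (f y - f x) ≤ h * (- p (x - y)) :=
    mul_le_mul_of_nonneg_left hfy (le_of_lt hh)
  have hnn : 0 ≤ (h * ‖p‖ - ‖z - y‖) ^ 2 := sq_nonneg _
  rw [hyz] at hpb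
  rw [hdecomp] at key
  rw [h3pt, hw] at hvar
  nlinarith [key, hvar, hbr, hnn, mul_le_mul_of_nonneg_left hpb hh.le]
end
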